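/- Let f(x) = 1/(x·(log x)²) for x ≥ e (and f(x) = 0 for 0 ≤ x < e), a probability density with infinite mean. Then for every constant c > 0, lim_{δ→0⁺} (log δ)² · δ·∫_e^{c/δ} x·f(x) dx = c. -/

import Mathlib

open Filter Set MeasureTheory


-- FTC lemma
lemma ftc_key (T : ℝ) (hT : Real.exp 1 ≤ T) :
    ∫ x in Set.Ioc (Real.exp 1) T, 1/(Real.log x)^2
      = T/(Real.log T)^2 - Real.exp 1 + 2 * ∫ x in Set.Ioc (Real.exp 1) T, 1/(Real.log x)^3 := by
  set e1 := Real.exp 1 with he1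
  have he1pos : 0 < e1 := Real.exp_pos 1
  have hlog : ∀ x ∈ Set.Icc e1 T, 1 ≤ Real.log x := by
    intro x hx
    calc (1:ℝ) = Real.log e1 := (Real.log_exp 1).symm
    _ ≤ Real.log x := Real.log_le_log he1pos hx.1
  have hsub : Set.Icc e1 T ⊆ {(0:ℝ)}ᶜ := by
    intro x hx; simp only [Set.mem_compl_iff, Set.mem_singleton_iff]
    exact (lt_of_lt_of_le he1pos hx.1).ne'
  have hcont2 : ContinuousOn (fun x => 1/(Real.log x)^2) (Set.Icc e1 T) := by
    apply ContinuousOn.div continuousOn_const ((Real.continuousOn_log.mono hsub).pow 2)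
    intro x hx
    exact pow_ne_zero 2 (by linarith [hlog x hx])
  have hcont3 : ContinuousOn (fun x => 1/(Real.log x)^3) (Set.Icc e1 T) := by
    apply ContinuousOn.div continuousOn_const ((Real.continuousOn_log.mono hsub).pow 3)
    intro x hx
    exact pow_ne_zero 3 (by linarith [hlog x hx])
  have hcont3' : ContinuousOn (fun x => 2/(Real.log x)^3) (Set.Icc e1 T) := by
    apply ContinuousOn.div continuousOn_const ((Real.continuousOn_log.mono hsub).pow 3)
    intro x hx
    exact pow_ne_zero 3 (by linarith [hlog x hx])
  have huIcc : Set.uIcc e1 T = Set.Icc e1 T := Set.uIcc_of_le hT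
  have hderiv : ∀ x ∈ Set.uIcc e1 T,
      HasDerivAt (fun y => y/(Real.log y)^2) (1/(Real.log x)^2 - 2/(Real.log x)^3) x := by
    rw [huIcc]
    intro x hx
    have hx0 : (0:ℝ) < x := lt_of_lt_of_le he1pos hx.1
    have hlx : Real.log x ≠ 0 := by linarith [hlog x hx]
    have h1 : HasDerivAt (fun y => (Real.log y)^2) (2 * (Real.log x)^1 * x⁻¹) x :=
      (Real.hasDerivAt_log hx0.ne').pow 2
    have h2 := (hasDerivAt_id x).div h1 (pow_ne_zero 2 hlx)
    refine h2.congr_deriv ?_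
    simp only [id]
    field_simp
  have hint : IntervalIntegrable (fun x => 1/(Real.log x)^2 - 2/(Real.log x)^3) volume e1 T := by
    apply ContinuousOn.intervalIntegrable
    rw [huIcc]
    exact hcont2.sub hcont3'
  have hFTC := intervalIntegral.integral_eq_sub_of_hasDerivAt hderiv hint
  have hi2 : IntervalIntegrable (fun x => 1/(Real.log x)^2) volume e1 T := by
    apply ContinuousOn.intervalIntegrable; rw [huIcc]; exact hcont2
  have hi3 : IntervalIntegrable (fun x => 2/(Real.log x)^3) volume e1 T := by
    apply ContinuousOn.intervalIntegrable; rw [huIcc]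
    exact hcont3'
  rw [intervalIntegral.integral_sub hi2 hi3] at hFTC
  have h3 : ∫ x in e1..T, 2/(Real.log x)^3 = 2 * ∫ x in e1..T, 1/(Real.log x)^3 := by
    rw [← intervalIntegral.integral_const_mul]
    congr 1; funext x; ring
  rw [h3] at hFTC
  have hge : Real.log e1 = 1 := Real.log_exp 1
  rw [intervalIntegral.integral_of_le hT, intervalIntegral.integral_of_le hT] at hFTC
  simp only [hge] at hFTC
  have : (e1:ℝ)/(1:ℝ)^2 = e1 := by norm_num
  rw [this] at hFTC
  linarith

lemma J_bound (T : ℝ) (hT : Real.exp 2 ≤ T) :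
    ∫ x in Set.Ioc (Real.exp 1) T, 1/(Real.log x)^3 ≤ Real.sqrt T + 8*T/(Real.log T)^3 := by
  set e1 := Real.exp 1 with he1
  set s := Real.sqrt T with hs
  have he1pos : 0 < e1 := Real.exp_pos 1
  have hTpos : 0 < T := lt_of_lt_of_le (Real.exp_pos 2) hT
  have hlogT : 2 ≤ Real.log T := by
    calc (2:ℝ) = Real.log (Real.exp 2) := (Real.log_exp 2).symm
    _ ≤ Real.log T := Real.log_le_log (Real.exp_pos 2) hT
  have hse : e1 ≤ s := by
    have h2 : e1^2 = Real.exp 2 := by rw [sq, ← Real.exp_add]; norm_num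
    rw [hs, show e1 = Real.sqrt (e1^2) by rw [Real.sqrt_sq he1pos.le]]
    exact Real.sqrt_le_sqrt (by rw [h2]; exact hT)
  have hT1 : 1 ≤ T := le_trans (Real.one_le_exp (by norm_num)) hT
  have h1s : 1 ≤ s := by
    rw [hs, show (1:ℝ) = Real.sqrt 1 by simp]
    exact Real.sqrt_le_sqrt hT1
  have hsT : s ≤ T := by nlinarith [Real.sq_sqrt hTpos.le]
  have hspos : 0 < s := lt_of_lt_of_le he1pos hse
  have hlogs : Real.log s = Real.log T / 2 := Real.log_sqrt hTpos.le
  have hlogx : ∀ x ∈ Set.Icc e1 T, 1 ≤ Real.log x := by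
    intro x hx
    calc (1:ℝ) = Real.log e1 := (Real.log_exp 1).symm
    _ ≤ Real.log x := Real.log_le_log he1pos hx.1
  have hsub : Set.Icc e1 T ⊆ {(0:ℝ)}ᶜ := fun x hx => by
    simp only [Set.mem_compl_iff, Set.mem_singleton_iff]
    exact (lt_of_lt_of_le he1pos hx.1).ne'
  have hcont : ContinuousOn (fun x => 1/(Real.log x)^3) (Set.Icc e1 T) := by
    apply ContinuousOn.div continuousOn_const ((Real.continuousOn_log.mono hsub).pow 3)
    intro x hx
    exact pow_ne_zero 3 (by linarith [hlogx x hx])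
  have hi1 : IntervalIntegrable (fun x => 1/(Real.log x)^3) volume e1 s := by
    apply ContinuousOn.intervalIntegrable
    exact hcont.mono (by rw [Set.uIcc_of_le hse]; exact Set.Icc_subset_Icc le_rfl hsT)
  have hi2 : IntervalIntegrable (fun x => 1/(Real.log x)^3) volume s T := by
    apply ContinuousOn.intervalIntegrable
    exact hcont.mono (by rw [Set.uIcc_of_le hsT]; exact Set.Icc_subset_Icc hse le_rfl)
  rw [← intervalIntegral.integral_of_le (hse.trans hsT),
    ← intervalIntegral.integral_add_adjacent_intervals hi1 hi2]
  have hb1 : ∫ x in e1..s, 1/(Real.log x)^3 ≤ s - e1 := by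
    have := intervalIntegral.integral_mono_on hse hi1 (intervalIntegrable_const (c := (1:ℝ)))
      (fun x hx => by
        have h1 := hlogx x ⟨hx.1, hx.2.trans hsT⟩
        rw [div_le_one (by positivity)]
        calc (1:ℝ) = 1^3 := by norm_num
        _ ≤ (Real.log x)^3 := pow_le_pow_left₀ (by norm_num) h1 3)
    simpa using this
  have hb2 : ∫ x in s..T, 1/(Real.log x)^3 ≤ (T - s) * 8/(Real.log T)^3 := by
    have hmono := intervalIntegral.integral_mono_on hsT hi2
      (intervalIntegrable_const (c := 8/(Real.log T)^3))
      (fun x hx => by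
        have hlx : Real.log T / 2 ≤ Real.log x := by
          rw [← hlogs]; exact Real.log_le_log hspos hx.1
        have hp : (Real.log T / 2)^3 ≤ (Real.log x)^3 :=
          pow_le_pow_left₀ (by linarith) hlx 3
        have h0 : (0:ℝ) < (Real.log T / 2)^3 := by positivity
        calc 1/(Real.log x)^3 ≤ 1/((Real.log T / 2)^3) :=
              one_div_le_one_div_of_le h0 hp
        _ = 8/(Real.log T)^3 := by rw [div_pow, one_div_div]; norm_num
        )
    simpa [smul_eq_mul] using hmono
  have : (T - s) * 8/(Real.log T)^3 ≤ 8*T/(Real.log T)^3 := by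
    rw [div_le_div_iff_of_pos_right (by positivity : (0:ℝ) < (Real.log T)^3)]
    nlinarith
  linarith

lemma lim_ratio (a : ℝ) : Tendsto (fun u : ℝ => u/(a - u)) atBot (nhds (-1)) := by
  have h1 : Tendsto (fun u : ℝ => a - u) atBot atTop := by
    simp only [sub_eq_add_neg]
    exact tendsto_atTop_add_const_left _ _ tendsto_neg_atBot_atTop
  have h2 : Tendsto (fun u : ℝ => a * (a - u)⁻¹ - 1) atBot (nhds (a * 0 - 1)) :=
    (tendsto_const_nhds.mul h1.inv_tendsto_atTop).sub tendsto_const_nhds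
  rw [show a * 0 - 1 = (-1 : ℝ) by ring] at h2
  apply h2.congr'
  filter_upwards [eventually_lt_atBot a] with u hu
  have hd : a - u ≠ 0 := by linarith
  field_simp
  ring

lemma lim_A (c a : ℝ) : Tendsto (fun u : ℝ => c * u^2/(a - u)^2) atBot (nhds c) := by
  have h := (tendsto_const_nhds (x := c)).mul ((lim_ratio a).pow 2)
  rw [show c * (-1:ℝ)^2 = c by ring] at h
  apply h.congr
  intro u
  rw [div_pow, mul_div_assoc]

lemma lim_B : Tendsto (fun u : ℝ => Real.exp u * u^2) atBot (nhds 0) := by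
  have h := (Real.tendsto_pow_mul_exp_neg_atTop_nhds_zero 2).comp tendsto_neg_atBot_atTop
  apply h.congr
  intro u
  simp only [Function.comp_apply, neg_neg]
  ring

lemma lim_B2 : Tendsto (fun u : ℝ => Real.exp (u/2) * u^2) atBot (nhds 0) := by
  have hcomp : Tendsto (fun u : ℝ => -u/2) atBot atTop :=
    tendsto_neg_atBot_atTop.atTop_div_const (by norm_num)
  have h := (Real.tendsto_pow_mul_exp_neg_atTop_nhds_zero 2).comp hcomp
  have h4 := h.const_mul (4:ℝ)
  rw [mul_zero] at h4
  apply h4.congr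
  intro u
  simp only [Function.comp_apply]
  rw [show -(-u/2) = u/2 by ring]
  ring

lemma lim_C2 (a : ℝ) : Tendsto (fun u : ℝ => u^2/(a - u)^3) atBot (nhds 0) := by
  have h1 : Tendsto (fun u : ℝ => a - u) atBot atTop := by
    simp only [sub_eq_add_neg]
    exact tendsto_atTop_add_const_left _ _ tendsto_neg_atBot_atTop
  have h := ((lim_ratio a).pow 2).mul h1.inv_tendsto_atTop
  rw [show ((-1:ℝ))^2 * 0 = 0 by ring] at h
  apply h.congr
  intro u
  rw [div_pow, Pi.inv_apply, ← div_eq_mul_inv, div_div, ← pow_succ]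
/-- for the density `f(x) = 1/(x (log x)²)` on `[e,∞)` (infinite mean)
and any `c > 0`, `lim_{δ→0⁺} (log δ)² · δ·∫_e^{c/δ} x f(x) dx = c`. -/
theorem log_squared_truncated_mean (c : ℝ) (hc : 0 < c) :
    Tendsto
      (fun δ : ℝ =>
        (Real.log δ) ^ 2 *
          (δ * ∫ x in Set.Ioc (Real.exp 1) (c / δ), x * (1 / (x * (Real.log x) ^ 2))))
      (nhdsWithin 0 (Set.Ioi 0)) (nhds c) := by
  set e1 := Real.exp 1 with he1
  set a := Real.log c with ha
  -- the three pieces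
  set A : ℝ → ℝ := fun δ => c * (Real.log δ)^2/(a - Real.log δ)^2 with hA
  set B : ℝ → ℝ := fun δ => -e1 * (δ * (Real.log δ)^2) with hB
  set C : ℝ → ℝ := fun δ =>
    2 * ((Real.log δ)^2 * (δ * ∫ x in Set.Ioc e1 (c/δ), 1/(Real.log x)^3)) with hC
  have hlog : Tendsto Real.log (nhdsWithin 0 (Set.Ioi 0)) atBot :=
    Real.tendsto_log_nhdsGT_zero
  -- eventual smallness facts
  have hsmall : ∀ᶠ δ in nhdsWithin (0:ℝ) (Set.Ioi 0),
      0 < δ ∧ Real.exp 2 ≤ c/δ := by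
    filter_upwards [self_mem_nhdsWithin,
      eventually_nhdsWithin_of_eventually_nhds
        (eventually_lt_nhds (show (0:ℝ) < c / Real.exp 2 by positivity))] with δ h1 h2
    refine ⟨h1, ?_⟩
    rw [le_div_iff₀ h1]
    rw [lt_div_iff₀ (Real.exp_pos 2)] at h2
    linarith
  -- key facts under smallness
  have hkey : ∀ δ : ℝ, 0 < δ → Real.exp 2 ≤ c/δ →
      ((Real.log δ) ^ 2 *
        (δ * ∫ x in Set.Ioc e1 (c / δ), x * (1 / (x * (Real.log x) ^ 2)))
        = A δ + B δ + C δ)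
      ∧ Real.log (c/δ) = a - Real.log δ := by
    intro δ hδ hTe2
    have hT1 : e1 ≤ c/δ := le_trans (Real.exp_le_exp.mpr one_le_two) hTe2
    have hlogT : Real.log (c/δ) = a - Real.log δ := Real.log_div hc.ne' hδ.ne'
    refine ⟨?_, hlogT⟩
    have hcongr : ∫ x in Set.Ioc e1 (c/δ), x * (1 / (x * (Real.log x) ^ 2))
        = ∫ x in Set.Ioc e1 (c/δ), 1/(Real.log x)^2 := by
      apply setIntegral_congr_fun measurableSet_Ioc
      intro x hx
      have hx0 : (0:ℝ) < x := lt_trans (Real.exp_pos 1) hx.1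
      have hlx : 1 < Real.log x := by
        calc (1:ℝ) = Real.log e1 := (Real.log_exp 1).symm
        _ < Real.log x := Real.log_lt_log (Real.exp_pos 1) hx.1
      field_simp
    rw [hcongr, ftc_key _ hT1, hlogT]
    have hd : a - Real.log δ ≠ 0 := by
      have h2 : (2:ℝ) ≤ Real.log (c/δ) := by
        calc (2:ℝ) = Real.log (Real.exp 2) := (Real.log_exp 2).symm
        _ ≤ _ := Real.log_le_log (Real.exp_pos 2) hTe2
      rw [hlogT] at h2; linarith
    rw [hA, hB, hC]
    field_simp
    ring
  -- limit of A
  have hTA : Tendsto A (nhdsWithin 0 (Set.Ioi 0)) (nhds c) := (lim_A c a).comp hlog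
  -- limit of B
  have hTB : Tendsto B (nhdsWithin 0 (Set.Ioi 0)) (nhds 0) := by
    have h1 : Tendsto (fun δ : ℝ => δ * (Real.log δ)^2) (nhdsWithin 0 (Set.Ioi 0)) (nhds 0) := by
      apply (lim_B.comp hlog).congr'
      filter_upwards [self_mem_nhdsWithin] with δ hδ
      simp only [Function.comp_apply, Real.exp_log hδ]
    have := h1.const_mul (-e1)
    rw [mul_zero] at this
    exact this
  -- limit of C : squeeze
  have hTC : Tendsto C (nhdsWithin 0 (Set.Ioi 0)) (nhds 0) := by
    set E : ℝ → ℝ := fun δ =>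
      2 * (Real.sqrt c * (Real.sqrt δ * (Real.log δ)^2)
        + 8 * c * ((Real.log δ)^2/(a - Real.log δ)^3)) with hE
    have hTE : Tendsto E (nhdsWithin 0 (Set.Ioi 0)) (nhds 0) := by
      have h1 : Tendsto (fun δ : ℝ => Real.sqrt δ * (Real.log δ)^2)
          (nhdsWithin 0 (Set.Ioi 0)) (nhds 0) := by
        apply (lim_B2.comp hlog).congr'
        filter_upwards [self_mem_nhdsWithin] with δ hδ
        simp only [Function.comp_apply]
        rw [Real.exp_half, Real.exp_log hδ]
      have h2 : Tendsto (fun δ : ℝ => (Real.log δ)^2/(a - Real.log δ)^3)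
          (nhdsWithin 0 (Set.Ioi 0)) (nhds 0) := (lim_C2 a).comp hlog
      have := ((h1.const_mul (Real.sqrt c)).add (h2.const_mul (8*c))).const_mul (2:ℝ)
      simpa using this
    apply tendsto_of_tendsto_of_tendsto_of_le_of_le' tendsto_const_nhds hTE
    · -- 0 ≤ C δ
      filter_upwards [hsmall] with δ hδ
      obtain ⟨hδ0, hTe2⟩ := hδ
      have hJ : 0 ≤ ∫ x in Set.Ioc e1 (c/δ), 1/(Real.log x)^3 := by
        apply setIntegral_nonneg measurableSet_Ioc
        intro x hx
        have hlx : (1:ℝ) ≤ Real.log x := by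
          calc (1:ℝ) = Real.log e1 := (Real.log_exp 1).symm
          _ ≤ Real.log x := (Real.log_lt_log (Real.exp_pos 1) hx.1).le
        positivity
      rw [hC]
      positivity
    · -- C δ ≤ E δ
      filter_upwards [hsmall] with δ hδ
      obtain ⟨hδ0, hTe2⟩ := hδ
      have hlogT := (hkey δ hδ0 hTe2).2
      have hJb := J_bound (c/δ) hTe2
      have hd2 : (2:ℝ) ≤ a - Real.log δ := by
        rw [← hlogT]
        calc (2:ℝ) = Real.log (Real.exp 2) := (Real.log_exp 2).symm
        _ ≤ _ := Real.log_le_log (Real.exp_pos 2) hTe2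
      have heq : δ * (Real.sqrt (c/δ) + 8*(c/δ)/(Real.log (c/δ))^3)
          = Real.sqrt c * Real.sqrt δ + 8 * c /(a - Real.log δ)^3 := by
        rw [hlogT, Real.sqrt_div hc.le]
        rw [mul_add]
        congr 1
        · rw [div_eq_mul_inv, ← mul_assoc, mul_comm δ (Real.sqrt c), mul_assoc,
            ← div_eq_mul_inv, Real.div_sqrt]
        · have hd : (a - Real.log δ) ≠ 0 := by linarith
          field_simp
      simp only [hC, hE]
      have hsq : 0 ≤ (Real.log δ)^2 := sq_nonneg _
      have step : δ * ∫ x in Set.Ioc e1 (c/δ), 1/(Real.log x)^3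
          ≤ Real.sqrt c * Real.sqrt δ + 8 * c /(a - Real.log δ)^3 := by
        rw [← heq]
        exact mul_le_mul_of_nonneg_left hJb hδ0.le
      have step2 := mul_le_mul_of_nonneg_left step hsq
      have hring : 2 * (Real.sqrt c * (Real.sqrt δ * (Real.log δ)^2)
          + 8 * c * ((Real.log δ)^2/(a - Real.log δ)^3))
          = 2 * ((Real.log δ)^2 * (Real.sqrt c * Real.sqrt δ + 8 * c /(a - Real.log δ)^3)) := by
        ring
      rw [hring]
      linarith
  -- combine
  have hsum := (hTA.add hTB).add hTC
  rw [show c + 0 + 0 = c by ring] at hsum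
  apply hsum.congr'
  filter_upwards [hsmall] with δ hδ
  exact ((hkey δ hδ.1 hδ.2).1).symm
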